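/- BA_Lip(ω^ω) implies BA_Lip(2^ω): if for all ℵ1-dense A, B ⊆ ℕ → ℕ there is a Lipschitz f : (ℕ → ℕ) → (ℕ → ℕ) which is injective on A and satisfies f '' A ⊆ B, then for all ℵ1-dense A, B ⊆ ℕ → Bool there is a Lipschitz f : (ℕ → Bool) → (ℕ → Bool) which is injective on A and satisfies f '' A ⊆ B. -/

import Mathlib

open Cardinal Set

section Aux

/-- The canonical well-order of order type `ω₁`. -/
abbrev Stmt8W : Type := (Cardinal.aleph 1).ord.ToType

instance stmt8iwo : IsWellOrder Stmt8W (· < ·) := isWellOrder_lt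

/-- Disjoint refinement: countably many sets of size `ℵ₁` admit pairwise disjoint
subsets of size `ℵ₁`. -/
lemma exists_disjoint_refinement {X : Type} (B : ℕ → Set X)
    (hB : ∀ i, #(B i) = Cardinal.aleph 1) :
    ∃ O : ℕ → Set X, (∀ i, O i ⊆ B i) ∧ (∀ i, #(O i) = Cardinal.aleph 1) ∧
      ∀ i j, i ≠ j → O i ∩ O j = ∅ := by
  classical
  have hmkW : #Stmt8W = Cardinal.aleph 1 := by
    rw [Cardinal.mk_toType, Cardinal.card_ord]
  set r : Stmt8W × ℕ → Stmt8W × ℕ → Prop := Prod.Lex (· < ·) (· < ·) with hr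
  have wfr : WellFounded r := WellFounded.prod_lex wellFounded_lt wellFounded_lt
  -- initial segments are small
  have hsmall : ∀ p : Stmt8W × ℕ, #{q : Stmt8W × ℕ // r q p} < Cardinal.aleph 1 := by
    intro p
    have h1 : #{b : Stmt8W // b < p.1} < Cardinal.aleph 1 := by
      have h0 : #{b : Stmt8W // b < p.1} = (@Ordinal.typein Stmt8W (· < ·) stmt8iwo p.1).card :=
        (@Ordinal.card_typein Stmt8W (· < ·) stmt8iwo p.1).symm
      rw [h0]
      exact Cardinal.lt_ord.mp (Ordinal.typein_lt_self p.1)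
    have hemb : ∃ f : {q : Stmt8W × ℕ // r q p} → ({b : Stmt8W // b < p.1} × ℕ) ⊕ ℕ,
        Function.Injective f := by
      have heq : ∀ q : {q : Stmt8W × ℕ // r q p}, ¬ q.1.1 < p.1 → q.1.1 = p.1 := by
        intro q hq
        rcases Prod.lex_def.mp q.2 with h | h
        · exact absurd h hq
        · exact h.1
      refine ⟨fun q => if h : q.1.1 < p.1 then Sum.inl (⟨q.1.1, h⟩, q.1.2)
        else Sum.inr q.1.2, ?_⟩
      intro q1 q2 hq
      by_cases h1' : q1.1.1 < p.1 <;> by_cases h2' : q2.1.1 < p.1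
      · simp only [dif_pos h1', dif_pos h2'] at hq
        have h3 := Sum.inl.inj hq
        apply Subtype.ext
        apply Prod.ext_iff.mpr
        constructor
        · exact congrArg (fun y => (y.1 : Stmt8W)) h3
        · exact congrArg (fun y => y.2) h3
      · simp only [dif_pos h1', dif_neg h2'] at hq
        exact absurd hq Sum.inl_ne_inr
      · simp only [dif_neg h1', dif_pos h2'] at hq
        exact absurd hq Sum.inr_ne_inl
      · simp only [dif_neg h1', dif_neg h2'] at hq
        have h5 := Sum.inr.inj hq
        exact Subtype.ext (Prod.ext_iff.mpr ⟨(heq q1 h1').trans (heq q2 h2').symm, h5⟩)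
    obtain ⟨f, hf⟩ := hemb
    calc #{q : Stmt8W × ℕ // r q p} ≤ #(({b : Stmt8W // b < p.1} × ℕ) ⊕ ℕ) :=
            Cardinal.mk_le_of_injective hf
      _ = #{b : Stmt8W // b < p.1} * ℵ₀ + ℵ₀ := by simp
      _ < Cardinal.aleph 1 := by
          apply Cardinal.add_lt_of_lt (Cardinal.aleph0_le_aleph 1)
          · exact Cardinal.mul_lt_of_lt (Cardinal.aleph0_le_aleph 1) h1
              Cardinal.aleph0_lt_aleph_one
          · exact Cardinal.aleph0_lt_aleph_one
  -- the recursive choice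
  have hex : ∀ p : Stmt8W × ℕ, ∀ IH : (∀ q : Stmt8W × ℕ, r q p → X),
      ∃ x : X, x ∈ B p.2 ∧ ∀ q (hq : r q p), IH q hq ≠ x := by
    intro p IH
    have hTlt : #(Set.range (fun q : {q : Stmt8W × ℕ // r q p} => IH q.1 q.2))
        < Cardinal.aleph 1 := Cardinal.mk_range_le.trans_lt (hsmall p)
    have hnsub : ¬ B p.2 ⊆ Set.range (fun q : {q : Stmt8W × ℕ // r q p} => IH q.1 q.2) := by
      intro hsub
      have h6 := Cardinal.mk_le_mk_of_subset hsub
      rw [hB p.2] at h6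
      exact absurd (h6.trans_lt hTlt) (lt_irrefl _)
    obtain ⟨x, hx1, hx2⟩ := Set.not_subset.mp hnsub
    refine ⟨x, hx1, fun q hq hqx => hx2 ?_⟩
    exact ⟨⟨q, hq⟩, hqx⟩
  let Φ : Stmt8W × ℕ → X := wfr.fix (fun p IH => Classical.choose (hex p IH))
  have key : ∀ p, Φ p ∈ B p.2 ∧ ∀ q (hq : r q p), Φ q ≠ Φ p := by
    intro p
    have h7 : Φ p = Classical.choose (hex p (fun q _ => Φ q)) :=
      wfr.fix_eq (fun p IH => Classical.choose (hex p IH)) p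
    rw [h7]
    exact Classical.choose_spec (hex p (fun q _ => Φ q))
  have tri : ∀ p q : Stmt8W × ℕ, p ≠ q → r p q ∨ r q p := by
    rintro ⟨a, i⟩ ⟨b, j⟩ hne
    rcases lt_trichotomy a b with h | h | h
    · exact Or.inl (Prod.Lex.left _ _ h)
    · subst h
      rcases lt_trichotomy i j with h' | h' | h'
      · exact Or.inl (Prod.Lex.right _ h')
      · exact absurd (by rw [h']) hne
      · exact Or.inr (Prod.Lex.right _ h')
    · exact Or.inr (Prod.Lex.left _ _ h)
  have Φinj : Function.Injective Φ := by
    intro p q h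
    by_contra hne
    rcases tri p q hne with hrel | hrel
    · exact (key q).2 p hrel h
    · exact (key p).2 q hrel h.symm
  refine ⟨fun i => Set.range (fun w : Stmt8W => Φ (w, i)), ?_, ?_, ?_⟩
  · rintro i x ⟨w, rfl⟩
    exact (key (w, i)).1
  · intro i
    have hinj : Function.Injective (fun w : Stmt8W => Φ (w, i)) := by
      intro w w' h
      have h8 := Φinj h
      exact (Prod.ext_iff.mp h8).1
    rw [Cardinal.mk_range_eq _ hinj, hmkW]
  · intro i j hij
    rw [Set.eq_empty_iff_forall_notMem]
    rintro x ⟨⟨w, hw⟩, ⟨w', hw'⟩⟩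
    have h9 : ((w, i) : Stmt8W × ℕ) = (w', j) := Φinj (hw.trans hw'.symm)
    exact hij (Prod.ext_iff.mp h9).2

/-- Every point of an open set in a product of discrete spaces has a cylinder
neighborhood inside it. -/
lemma exists_cylinder_subset {Y : Type} [TopologicalSpace Y] [DiscreteTopology Y]
    {U : Set (ℕ → Y)} (hU : IsOpen U) {x : ℕ → Y} (hx : x ∈ U) :
    ∃ n : ℕ, ∀ y : ℕ → Y, (∀ i < n, y i = x i) → y ∈ U := by
  obtain ⟨I, u, hu, hsub⟩ := isOpen_pi_iff.mp hU x hx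
  refine ⟨(I.sup id) + 1, fun y hy => hsub ?_⟩
  intro a ha
  have ha' : a ∈ I := ha
  have h1 : y a = x a := hy a (Nat.lt_succ_of_le (Finset.le_sup (f := id) ha'))
  rw [h1]
  exact (hu a ha').2

/-- Cylinders are open in a product of discrete spaces. -/
lemma cylinder_isOpen {Y : Type} [TopologicalSpace Y] [DiscreteTopology Y]
    (x : ℕ → Y) (n : ℕ) : IsOpen {y : ℕ → Y | ∀ i < n, y i = x i} := by
  have h1 : {y : ℕ → Y | ∀ i < n, y i = x i}
      = ⋂ i ∈ Finset.range n, (fun y : ℕ → Y => y i) ⁻¹' {x i} := by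
    ext y; simp [Finset.mem_range]
  rw [h1]
  exact isOpen_biInter_finset fun i _ =>
    (continuous_apply i).isOpen_preimage _ (isOpen_discrete _)

end Aux

/-- A set `S` in a topological space is `ℵ₁`-dense if its intersection with every nonempty
open set has cardinality `ℵ₁`. -/
def Aleph1Dense {Z : Type*} [TopologicalSpace Z] (S : Set Z) : Prop :=
  ∀ U : Set Z, IsOpen U → U.Nonempty → Cardinal.mk ↥(S ∩ U) = Cardinal.aleph 1

/-- `f` is Lipschitz: if `x` and `y` agree below `n` then so do `f x` and `f y`. -/
def IsLip {X : ℕ → Type*} (f : (∀ n, X n) → (∀ n, X n)) : Prop :=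
  ∀ x y : ∀ n, X n, ∀ n : ℕ, (∀ i < n, x i = y i) → ∀ i < n, f x i = f y i

section Main

/-- The coding map from Cantor space to Baire space. -/
def stmt8e (z : ℕ → Bool) : ℕ → ℕ := fun n => cond (z n) 3 2

/-- The (Lipschitz) projection from Baire space to Cantor space. -/
def stmt8p (x : ℕ → ℕ) : ℕ → Bool := fun n => decide (x n = 3)

/-- The base point of the cylinder associated to a finite sequence. -/
def stmt8w (s : List ℕ) : ℕ → Bool := fun i => decide (s.getD i 0 = 3)

/-- The binary cylinder associated to a finite sequence. -/
def stmt8Cyl (s : List ℕ) : Set (ℕ → Bool) := {z | ∀ i < s.length, z i = stmt8w s i}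

/-- Lift a binary sequence to a Baire sequence extending `s`. -/
def stmt8xf (s : List ℕ) (z : ℕ → Bool) : ℕ → ℕ :=
  fun n => if n < s.length then s.getD n 0 else cond (z n) 3 2

lemma stmt8section {s : List ℕ} {z : ℕ → Bool} (hz : z ∈ stmt8Cyl s) :
    stmt8p (stmt8xf s z) = z := by
  funext n
  by_cases h : n < s.length
  · have h1 := hz n h
    simp only [stmt8p, stmt8xf, if_pos h]
    exact (h1.symm : _)
  · simp only [stmt8p, stmt8xf, if_neg h]
    cases hzn : z n <;> simp

/-- `BA_Lip(ω^ω)` implies `BA_Lip(2^ω)`. -/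
theorem stmt_8
    (hBA : ∀ A B : Set (ℕ → ℕ), Aleph1Dense A → Aleph1Dense B →
      ∃ f : (ℕ → ℕ) → (ℕ → ℕ), IsLip f ∧ Set.InjOn f A ∧ f '' A ⊆ B) :
    ∀ A B : Set (ℕ → Bool), Aleph1Dense A → Aleph1Dense B →
      ∃ f : (ℕ → Bool) → (ℕ → Bool), IsLip f ∧ Set.InjOn f A ∧ f '' A ⊆ B := by
  classical
  intro A B hA hB
  -- the ℵ₁-dense refinement inside B
  have hBs : ∀ s : List ℕ, #(↥(B ∩ stmt8Cyl s)) = Cardinal.aleph 1 := by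
    intro s
    apply hB
    · exact cylinder_isOpen (stmt8w s) s.length
    · exact ⟨stmt8w s, fun i _ => rfl⟩
  set d : List ℕ ≃ ℕ := Denumerable.eqv (List ℕ) with hd
  obtain ⟨O₀, hO₀sub, hO₀card, hO₀disj⟩ :=
    exists_disjoint_refinement (fun i => B ∩ stmt8Cyl (d.symm i)) (fun i => hBs (d.symm i))
  set O : List ℕ → Set (ℕ → Bool) := fun s => O₀ (d s) with hO
  have hOsub : ∀ s, O s ⊆ B ∩ stmt8Cyl s := by
    intro s
    have h1 := hO₀sub (d s)
    rwa [Equiv.symm_apply_apply] at h1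
  have hOcard : ∀ s, #(O s) = Cardinal.aleph 1 := fun s => hO₀card (d s)
  have hOdisj : ∀ s t, s ≠ t → O s ∩ O t = ∅ := by
    intro s t hst
    exact hO₀disj (d s) (d t) (fun h => hst (d.injective h))
  -- the target set S
  set S : Set (ℕ → ℕ) := ⋃ s : List ℕ, (stmt8xf s) '' (O s) with hS
  have hxfinj : ∀ s, Set.InjOn (stmt8xf s) (O s) := by
    intro s z1 hz1 z2 hz2 hz
    have h1 := stmt8section (hOsub s hz1).2
    have h2 := stmt8section (hOsub s hz2).2
    rw [← h1, ← h2, hz]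
  have hpinjS : ∀ a ∈ S, ∀ b ∈ S, stmt8p a = stmt8p b → a = b := by
    intro a ha b hb hab
    rw [hS, Set.mem_iUnion] at ha hb
    obtain ⟨s, z, hz, rfl⟩ := ha
    obtain ⟨t, z', hz', rfl⟩ := hb
    have h1 := stmt8section (hOsub s hz).2
    have h2 := stmt8section (hOsub t hz').2
    have hzz : z = z' := by rw [← h1, ← h2, hab]
    subst hzz
    have hst : s = t := by
      by_contra hst
      have h3 : z ∈ O s ∩ O t := ⟨hz, hz'⟩
      rw [hOdisj s t hst] at h3
      exact h3
    subst hst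
    rfl
  have hpS : ∀ a ∈ S, stmt8p a ∈ B := by
    intro a ha
    rw [hS, Set.mem_iUnion] at ha
    obtain ⟨s, z, hz, rfl⟩ := ha
    rw [stmt8section (hOsub s hz).2]
    exact (hOsub s hz).1
  -- cardinality of S
  have hScardle : #S ≤ Cardinal.aleph 1 := by
    have h1 : #S ≤ #(List ℕ) * ⨆ s : List ℕ, #((stmt8xf s) '' (O s)) := by
      rw [hS]; exact Cardinal.mk_iUnion_le _
    have h2 : (⨆ s : List ℕ, #((stmt8xf s) '' (O s))) ≤ Cardinal.aleph 1 := by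
      apply ciSup_le'
      intro s
      calc #((stmt8xf s) '' (O s)) ≤ #(O s) := Cardinal.mk_image_le
        _ = Cardinal.aleph 1 := hOcard s
    calc #S ≤ #(List ℕ) * ⨆ s : List ℕ, #((stmt8xf s) '' (O s)) := h1
      _ ≤ ℵ₀ * Cardinal.aleph 1 := by
          apply mul_le_mul'
          · rw [Cardinal.mk_list_eq_aleph0]
          · exact h2
      _ = Cardinal.aleph 1 := by
          rw [Cardinal.mul_eq_max le_rfl (Cardinal.aleph0_le_aleph 1)]
          exact max_eq_right (Cardinal.aleph0_le_aleph 1)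
  -- density of S
  have hSdense : Aleph1Dense S := by
    rintro U hU ⟨x, hx⟩
    obtain ⟨n, hn⟩ := exists_cylinder_subset hU hx
    have hsubS : (stmt8xf (List.ofFn (fun i : Fin n => x i))) ''
        (O (List.ofFn (fun i : Fin n => x i))) ⊆ S ∩ U := by
      rintro _ ⟨z, hz, rfl⟩
      constructor
      · rw [hS]
        exact Set.mem_iUnion.mpr ⟨List.ofFn (fun i : Fin n => x i), z, hz, rfl⟩
      · apply hn
        intro i hi
        have hi' : i < (List.ofFn (fun i : Fin n => x i)).length := by
          rwa [List.length_ofFn]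
        rw [stmt8xf, if_pos hi', List.getD_eq_getElem _ _ hi', List.getElem_ofFn]
    apply le_antisymm
    · exact (Cardinal.mk_le_mk_of_subset Set.inter_subset_left).trans hScardle
    · calc Cardinal.aleph 1 = #(O (List.ofFn (fun i : Fin n => x i))) := (hOcard _).symm
        _ = #((stmt8xf (List.ofFn (fun i : Fin n => x i))) ''
              (O (List.ofFn (fun i : Fin n => x i)))) :=
            (Cardinal.mk_image_eq_of_injOn _ _ (hxfinj _)).symm
        _ ≤ #(S ∩ U : Set _) := Cardinal.mk_le_mk_of_subset hsubS
  -- cardinality of A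
  have hAcard : #A = Cardinal.aleph 1 := by
    have h1 := hA Set.univ isOpen_univ ⟨fun _ => false, trivial⟩
    rwa [Set.inter_univ] at h1
  -- the A-side set
  set A' : Set (ℕ → ℕ) := (stmt8e '' A) ∪ S with hA'
  have hA'le : #A' ≤ Cardinal.aleph 1 := by
    calc #A' ≤ #(stmt8e '' A) + #S := Cardinal.mk_union_le _ _
      _ ≤ Cardinal.aleph 1 + Cardinal.aleph 1 := by
          apply add_le_add
          · calc #(stmt8e '' A) ≤ #A := Cardinal.mk_image_le
              _ = Cardinal.aleph 1 := hAcard.le.antisymm hAcard.ge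
          · exact hScardle
      _ = Cardinal.aleph 1 := Cardinal.add_eq_self (Cardinal.aleph0_le_aleph 1)
  have hA'dense : Aleph1Dense A' := by
    intro U hU hne
    apply le_antisymm
    · exact (Cardinal.mk_le_mk_of_subset Set.inter_subset_left).trans hA'le
    · calc Cardinal.aleph 1 = #(S ∩ U : Set _) := (hSdense U hU hne).symm
        _ ≤ #(A' ∩ U : Set _) := by
            apply Cardinal.mk_le_mk_of_subset
            exact Set.inter_subset_inter_left U Set.subset_union_right
  obtain ⟨f', hLip', hInj', hIm'⟩ := hBA A' S hA'dense hSdense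
  refine ⟨fun z => stmt8p (f' (stmt8e z)), ?_, ?_, ?_⟩
  · -- Lipschitz
    intro x y n hagree i hi
    have h1 : ∀ j < n, stmt8e x j = stmt8e y j := by
      intro j hj
      simp only [stmt8e, hagree j hj]
    have h2 := hLip' (stmt8e x) (stmt8e y) n h1 i hi
    simp only [stmt8p, h2]
  · -- injective on A
    intro x hx y hy hxy
    have hex : stmt8e x ∈ A' := Or.inl ⟨x, hx, rfl⟩
    have hey : stmt8e y ∈ A' := Or.inl ⟨y, hy, rfl⟩
    have hfx : f' (stmt8e x) ∈ S := hIm' ⟨stmt8e x, hex, rfl⟩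
    have hfy : f' (stmt8e y) ∈ S := hIm' ⟨stmt8e y, hey, rfl⟩
    have h1 : f' (stmt8e x) = f' (stmt8e y) := hpinjS _ hfx _ hfy hxy
    have hee : stmt8e x = stmt8e y := hInj' hex hey h1
    funext n
    have h2 := congrFun hee n
    simp only [stmt8e] at h2
    cases hxn : x n <;> cases hyn : y n <;> rw [hxn, hyn] at h2 <;>
      first
      | rfl
      | exact absurd h2 (by decide)
  · -- image in B
    rintro _ ⟨x, hx, rfl⟩
    have hex : stmt8e x ∈ A' := Or.inl ⟨x, hx, rfl⟩
    have hfx : f' (stmt8e x) ∈ S := hIm' ⟨stmt8e x, hex, rfl⟩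
    exact hpS _ hfx
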